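/- Let n ≥ 2 and let m : Fin t → ℕ. Suppose ξ* is an integer point of ℝ^{(n−1)t} such that ξ* + c ∈ Γ(v,m) for every c ∈ {0,1}^{(n−1)t}. Then there exists c* ∈ {0,1}^{(n−1)t} such that ξ* + c* ∈ Γ(v,m) and, for every type a, n divides m a − ∑_{k=1}^{n−1} k·(ξ*_{k,a} + c*_{k,a}); that is, x_{n,a}(ξ*+c*) := (m a − ∑_{k=1}^{n−1} k·(ξ*+c*)_{k,a})/n is an integer for all a. -/

import Mathlib

/-- The feasible region `Γ(v, m)` of the reformulated LP: points
`ξ = (ξ_{k,a})`, `k ∈ {1,…,n−1}` (represented by `Fin (n-1)`, with `k : Fin (n-1)`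
standing for the paper's index `k+1`), satisfying the EF constraints and the
positivity constraints with parameter `m`. -/
def Gamma (n t : ℕ) (v : Fin n → Fin t → ℝ) (m : Fin t → ℝ) :
    Set (Fin (n - 1) → Fin t → ℝ) :=
  {ξ |
    (∀ i j : Fin n, i < j →
      0 ≤ (∑ a, v i a * ∑ k, (if i.val ≤ k.val ∧ k.val < j.val then ξ k a else 0)) ∧
      (∑ a, v j a * ∑ k, (if i.val ≤ k.val ∧ k.val < j.val then ξ k a else 0)) ≤ 0) ∧
    (∀ (i : Fin n) (a : Fin t),
      0 ≤ m a - (∑ k, (if k.val < i.val then ((k.val : ℝ) + 1) * ξ k a else 0))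
          + ∑ k, (if i.val ≤ k.val then ((n : ℝ) - (k.val : ℝ) - 1) * ξ k a else 0))}

theorem stmt_1 (n t : ℕ) (hn : 2 ≤ n) (v : Fin n → Fin t → ℝ)
    (hnonneg : ∀ i a, 0 ≤ v i a) (hpos : ∀ i, ∃ a, 0 < v i a)
    (m : Fin t → ℕ) (ξstar : Fin (n - 1) → Fin t → ℤ)
    (hcube : ∀ c : Fin (n - 1) → Fin t → ℕ, (∀ k a, c k a ≤ 1) →
      (fun k a => (ξstar k a : ℝ) + (c k a : ℝ)) ∈ Gamma n t v (fun a => (m a : ℝ))) :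
    ∃ cstar : Fin (n - 1) → Fin t → ℕ, (∀ k a, cstar k a ≤ 1) ∧
      (fun k a => (ξstar k a : ℝ) + (cstar k a : ℝ)) ∈ Gamma n t v (fun a => (m a : ℝ)) ∧
      ∀ a : Fin t, (n : ℤ) ∣ (m a : ℤ) -
        ∑ k, ((k.val : ℤ) + 1) * (ξstar k a + (cstar k a : ℤ)) := by
  set S : Fin t → ℤ := fun a => (m a : ℤ) - ∑ j, ((j.val : ℤ) + 1) * ξstar j a with hS
  refine ⟨fun k a => if S a % (n : ℤ) = (k.val : ℤ) + 1 then 1 else 0, ?_, ?_, ?_⟩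
  · intro k a; dsimp only; split <;> simp
  · apply hcube; intro k a; split <;> simp
  · intro a
    simp only [Nat.cast_ite, Nat.cast_one, Nat.cast_zero]
    have hn0 : (0 : ℤ) < n := by positivity
    have hr0 : 0 ≤ S a % n := Int.emod_nonneg _ (by omega)
    have hrn : S a % n < n := Int.emod_lt_of_pos _ hn0
    have hsum : ∑ k : Fin (n-1), ((k.val : ℤ) + 1) *
        (if S a % (n : ℤ) = (k.val : ℤ) + 1 then (1:ℤ) else 0) = S a % n := by
      by_cases hr : S a % n = 0
      · rw [hr, Finset.sum_eq_zero]
        intro k _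
        have : ¬ ((0:ℤ) = (k.val : ℤ) + 1) := by omega
        simp [hr, this]
      · have h1 : 1 ≤ S a % n := by omega
        set r := S a % n with hrdef
        have hk0 : r.toNat - 1 < n - 1 := by omega
        rw [Finset.sum_eq_single_of_mem (⟨r.toNat - 1, hk0⟩ : Fin (n-1)) (Finset.mem_univ _)]
        · have : r = ((r.toNat - 1 : ℕ) : ℤ) + 1 := by omega
          simp [← this]
        · intro k _ hk
          have : ¬ (r = (k.val : ℤ) + 1) := by
            intro h
            apply hk
            apply Fin.ext
            simp only []
            omega
          simp [this]
    have : (m a : ℤ) - ∑ k, ((k.val : ℤ) + 1) * (ξstar k a +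
        (if S a % (n : ℤ) = (k.val : ℤ) + 1 then (1:ℤ) else 0)) =
        S a - S a % n := by
      rw [hS]
      simp only [mul_add, Finset.sum_add_distrib]
      rw [hsum]; ring
    rw [this]
    have := Int.mul_ediv_add_emod (S a) n
    exact ⟨S a / n, by omega⟩
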